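/- Let |Ψ⟩ = Σ_{p∈P} α_p |p⟩|ψ_p⟩ with the |p⟩ mutually orthonormal and each |ψ_p⟩ a unit vector, Σ_p |α_p|² = 1. Let R ⊆ P, α = Σ_{p∉R} |α_p|², assume α < 1, and let |Ψ̃⟩ = (1−α)^{−1/2} Σ_{p∈R} α_p |p⟩|ψ_p⟩. If |Ψ⟩ is a ground state of a positive semidefinite Hermitian H with ⟨Ψ|H|Ψ⟩ = E₀ ≥ 0, then ⟨Ψ̃|H|Ψ̃⟩ − ⟨Ψ|H|Ψ⟩ ≤ (2/(1−α)) · Σ_{p∈R} Σ_{p'∈P∖R} |α_p| |α_{p'}| |⟨p|⟨ψ_p| H |p'⟩|ψ_{p'}⟩|. -/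

import Mathlib

/-- Truncating the initial part of a history state changes the energy by at most the
cross terms between the kept and deleted parts. -/
theorem stmt_7 {P : Type*} [Fintype P] [DecidableEq P]
    {E : Type*} [NormedAddCommGroup E] [InnerProductSpace ℂ E]
    (e : P → E) (he : Orthonormal ℂ e)
    (α : P → ℂ) (hα : ∑ p, ‖α p‖ ^ 2 = 1)
    (R : Finset P) (a : ℝ) (ha : a = ∑ p ∈ Rᶜ, ‖α p‖ ^ 2) (ha1 : a < 1)
    (H : E →L[ℂ] E)
    (hsa : ∀ x y : E, (inner ℂ (H x) y : ℂ) = inner ℂ x (H y))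
    (hpsd : ∀ x : E, 0 ≤ (inner ℂ x (H x) : ℂ).re)
    (E₀ : ℝ) (hE₀ : 0 ≤ E₀)
    (hval : (inner ℂ (∑ p, α p • e p) (H (∑ p, α p • e p)) : ℂ).re = E₀)
    (hground : H (∑ p, α p • e p) = (E₀ : ℂ) • ∑ p, α p • e p)
    (hmin : ∀ x : E, E₀ * ‖x‖ ^ 2 ≤ (inner ℂ x (H x) : ℂ).re) :
    (inner ℂ (((Real.sqrt (1 - a) : ℂ))⁻¹ • ∑ p ∈ R, α p • e p)
        (H (((Real.sqrt (1 - a) : ℂ))⁻¹ • ∑ p ∈ R, α p • e p)) : ℂ).re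
      - (inner ℂ (∑ p, α p • e p) (H (∑ p, α p • e p)) : ℂ).re
    ≤ (2 / (1 - a)) * ∑ p ∈ R, ∑ p' ∈ Rᶜ,
        ‖α p‖ * ‖α p'‖ * ‖(inner ℂ (e p) (H (e p')) : ℂ)‖ := by
  have h1a : (0:ℝ) < 1 - a := by linarith
  set ΨR : E := ∑ p ∈ R, α p • e p with hΨR
  set ΨC : E := ∑ p ∈ Rᶜ, α p • e p with hΨC
  set Ψ : E := ∑ p, α p • e p with hΨ
  have hsplit : ΨR + ΨC = Ψ := by
    rw [hΨR, hΨC, hΨ, Finset.sum_add_sum_compl]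
  set S : ℝ := ∑ p ∈ R, ∑ p' ∈ Rᶜ, ‖α p‖ * ‖α p'‖ * ‖(inner ℂ (e p) (H (e p')) : ℂ)‖ with hS
  -- cross term
  set B : ℂ := inner ℂ ΨR (H ΨC) with hB
  have hBexp : B = ∑ p ∈ R, ∑ p' ∈ Rᶜ,
      (starRingEnd ℂ) (α p) * α p' * (inner ℂ (e p) (H (e p')) : ℂ) := by
    rw [hB, hΨR, hΨC, map_sum, sum_inner, Finset.sum_congr rfl]
    intro p hp
    rw [inner_sum]
    refine Finset.sum_congr rfl fun p' hp' => ?_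
    rw [map_smul, inner_smul_left, inner_smul_right]
    ring
  have hBS : ‖B‖ ≤ S := by
    rw [hBexp, hS]
    refine (norm_sum_le _ _).trans (Finset.sum_le_sum fun p hp => ?_)
    refine (norm_sum_le _ _).trans (Finset.sum_le_sum fun p' hp' => ?_)
    simp [norm_mul]
  have hBre : -S ≤ B.re := by
    have := (abs_le.mp (Complex.abs_re_le_norm B)).1
    have hb : ‖B‖ ≤ S := hBS
    linarith
  -- norm of ΨC
  have hnormC : ‖ΨC‖ ^ 2 = a := by
    have h2 : (inner ℂ ΨC ΨC : ℂ) = ∑ p ∈ Rᶜ, (starRingEnd ℂ) (α p) * α p := by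
      rw [hΨC]; exact he.inner_sum α α Rᶜ
    have h3 : (inner ℂ ΨC ΨC : ℂ).re = a := by
      rw [h2, ha, Complex.re_sum]
      refine Finset.sum_congr rfl fun p hp => ?_
      rw [mul_comm, Complex.mul_conj]
      simp [Complex.normSq_eq_norm_sq, ← Complex.ofReal_pow]
    rw [← h3, ← inner_self_eq_norm_sq (𝕜 := ℂ)]
    rfl
  -- expansion of the total energy
  have hC : (inner ℂ ΨC (H ΨR) : ℂ) = (starRingEnd ℂ) B := by
    rw [hB, ← hsa, ← inner_conj_symm]
  have hexp : E₀ = (inner ℂ ΨR (H ΨR) : ℂ).re + (inner ℂ ΨC (H ΨC) : ℂ).re + 2 * B.re := by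
    have : (inner ℂ Ψ (H Ψ) : ℂ) = inner ℂ ΨR (H ΨR) + inner ℂ ΨC (H ΨC) + (B + (starRingEnd ℂ) B) := by
      rw [← hsplit, map_add, inner_add_left, inner_add_right, inner_add_right, ← hB, ← hC]
      ring
    have h4 := congrArg Complex.re this
    rw [hval] at h4
    rw [h4]
    simp [Complex.add_re, Complex.conj_re]
    ring
  -- lower bound on deleted part
  have hD : E₀ * a ≤ (inner ℂ ΨC (H ΨC) : ℂ).re := by
    have := hmin ΨC
    rwa [hnormC] at this
  -- kept part bound
  have hA : (inner ℂ ΨR (H ΨR) : ℂ).re ≤ (1 - a) * E₀ + 2 * S := by nlinarith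
  -- compute the scaled inner product
  set c : ℂ := ((Real.sqrt (1 - a) : ℂ))⁻¹ with hc
  have hcc : (starRingEnd ℂ) c * c = ((1 - a : ℝ) : ℂ)⁻¹ := by
    rw [hc, map_inv₀, Complex.conj_ofReal, ← mul_inv, ← Complex.ofReal_mul,
      Real.mul_self_sqrt h1a.le]
  have hlhs : (inner ℂ (c • ΨR) (H (c • ΨR)) : ℂ).re
      = (1 - a)⁻¹ * (inner ℂ ΨR (H ΨR) : ℂ).re := by
    rw [map_smul, inner_smul_left, inner_smul_right, ← mul_assoc, hcc,
      ← Complex.ofReal_inv, Complex.re_ofReal_mul]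
  rw [hlhs, hval]
  have hfin : (1 - a)⁻¹ * (inner ℂ ΨR (H ΨR) : ℂ).re ≤ E₀ + 2 / (1 - a) * S := by
    have h5 : (1 - a)⁻¹ * (inner ℂ ΨR (H ΨR) : ℂ).re ≤ (1-a)⁻¹ * ((1 - a) * E₀ + 2 * S) :=
      mul_le_mul_of_nonneg_left hA (by positivity)
    calc (1 - a)⁻¹ * (inner ℂ ΨR (H ΨR) : ℂ).re ≤ (1-a)⁻¹ * ((1 - a) * E₀ + 2 * S) := h5
      _ = E₀ + 2 / (1 - a) * S := by field_simp
  linarith
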